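/- Let n ≥ 1 be an integer, α ∈ (0,1), η > 0, and T ≥ 1. Let p⁰ ∈ A_α, let û⁰,…,û^{T−1} ∈ ℝ^n, and for t = 0,…,T−1 let p^{t+1} be a minimizer of q ↦ −η·⟨q, û^t⟩ + D(q‖p^t) over A_α. Set p̃^{t+1}_i = p^t_i·exp(η·û^t_i). Then for every p ∈ A_α, Σ_{t=0}^{T−1} ⟨p − p^t, û^t⟩ ≤ (1/η)·( D(p‖p⁰) + Σ_{t=0}^{T−1} D(p^t‖p̃^{t+1}) ). -/

import Mathlib

open Finset

/-- Unnormalized negative-entropy Bregman divergence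
`D(x‖y) = ∑ i, (x i * log (x i / y i) - x i + y i)` (with `0·log 0 = 0`,
which holds automatically since `Real.log 0 = 0`). -/
noncomputable def breg {n : ℕ} (x y : Fin n → ℝ) : ℝ :=
  ∑ i, (x i * Real.log (x i / y i) - x i + y i)

/-- The clipped simplex `A_α = {x : ∑ i, x i = 1 ∧ ∀ i, x i ≥ α / n}`. -/
def clippedSimplex (n : ℕ) (α : ℝ) : Set (Fin n → ℝ) :=
  {x | (∑ i, x i) = 1 ∧ ∀ i, α / n ≤ x i}


lemma term_nonneg {x y : ℝ} (hx : 0 ≤ x) (hy : 0 < y) :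
    0 ≤ x * Real.log (x / y) - x + y := by
  rcases eq_or_lt_of_le hx with h | hx
  · simp [← h]; positivity
  · have h1 : Real.log (y / x) ≤ y / x - 1 := Real.log_le_sub_one_of_pos (by positivity)
    have h2 : Real.log (x / y) = - Real.log (y / x) := by
      rw [← Real.log_inv]; congr 1; field_simp
    rw [h2]
    have h3 := mul_le_mul_of_nonneg_left h1 hx.le
    have h4 : x * (y / x) = y := by field_simp
    nlinarith

lemma term_quad {x y : ℝ} (hx : 0 ≤ x) (hy : 0 < y) :
    x * Real.log (x / y) - x + y ≤ (x - y)^2 / y := by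
  rcases eq_or_lt_of_le hx with h | hx
  · rw [← h]; simp
    rw [le_div_iff₀ hy]; nlinarith
  · have h1 : Real.log (x / y) ≤ x / y - 1 := Real.log_le_sub_one_of_pos (by positivity)
    rw [le_div_iff₀ hy]
    have h3 := mul_le_mul_of_nonneg_left h1 (mul_nonneg hx.le hy.le)
    have h4 : x * y * (x / y) = x * x := by field_simp
    nlinarith

lemma breg_nonneg {n : ℕ} {x y : Fin n → ℝ} (hx : ∀ i, 0 ≤ x i) (hy : ∀ i, 0 < y i) :
    0 ≤ breg x y := Finset.sum_nonneg fun i _ => term_nonneg (hx i) (hy i)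

lemma breg_le_quad {n : ℕ} {x y : Fin n → ℝ} (hx : ∀ i, 0 ≤ x i) (hy : ∀ i, 0 < y i) :
    breg x y ≤ ∑ i, (x i - y i)^2 / y i :=
  Finset.sum_le_sum fun i _ => term_quad (hx i) (hy i)

lemma breg_self {n : ℕ} (x : Fin n → ℝ) : breg x x = 0 := by
  unfold breg
  apply Finset.sum_eq_zero
  intro i _
  rcases eq_or_ne (x i) 0 with h | h
  · simp [h]
  · rw [div_self h]; simp

lemma breg_three_point {n : ℕ} {x y z : Fin n → ℝ} (hx : ∀ i, 0 ≤ x i)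
    (hy : ∀ i, 0 < y i) (hz : ∀ i, 0 < z i) :
    breg x z - breg x y - breg y z = ∑ i, (x i - y i) * Real.log (y i / z i) := by
  unfold breg
  rw [← Finset.sum_sub_distrib, ← Finset.sum_sub_distrib]
  apply Finset.sum_congr rfl
  intro i _
  rcases eq_or_lt_of_le (hx i) with h | hxi
  · rw [← h]; simp; ring
  · rw [Real.log_div hxi.ne' (hz i).ne', Real.log_div hxi.ne' (hy i).ne',
        Real.log_div (hy i).ne' (hz i).ne']
    ring

lemma breg_shift {n : ℕ} {q a : Fin n → ℝ} (c : Fin n → ℝ)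
    (hq : ∀ i, 0 ≤ q i) (ha : ∀ i, 0 < a i) :
    breg q (fun i => a i * Real.exp (c i)) =
      breg q a - ∑ i, q i * c i + ∑ i, (a i * Real.exp (c i) - a i) := by
  unfold breg
  rw [← Finset.sum_sub_distrib, ← Finset.sum_add_distrib]
  apply Finset.sum_congr rfl; intro i _
  rcases eq_or_lt_of_le (hq i) with h | hqi
  · rw [← h]; simp
  · have hlog : Real.log (q i / (a i * Real.exp (c i))) = Real.log (q i / a i) - c i := by
      rw [Real.log_div hqi.ne' (mul_pos (ha i) (Real.exp_pos _)).ne', Real.log_div hqi.ne' (ha i).ne',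
          Real.log_mul (ha i).ne' (Real.exp_ne_zero _), Real.log_exp]
      ring
    rw [hlog]; ring

lemma mem_pos {n : ℕ} (hn : 1 ≤ n) {α : ℝ} (hα : 0 < α) {x : Fin n → ℝ}
    (hx : x ∈ clippedSimplex n α) : ∀ i, 0 < x i := by
  intro i
  have hn' : (0:ℝ) < n := by exact_mod_cast hn
  exact lt_of_lt_of_le (div_pos hα hn') (hx.2 i)

lemma projection {n : ℕ} (hn : 1 ≤ n) {α : ℝ} (hα : 0 < α) {b p' pp : Fin n → ℝ}
    (hb : ∀ i, 0 < b i) (hp' : p' ∈ clippedSimplex n α) (hpp : pp ∈ clippedSimplex n α)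
    (hmin : ∀ q ∈ clippedSimplex n α, breg p' b ≤ breg q b) :
    breg pp p' ≤ breg pp b := by
  have hp'pos := mem_pos hn hα hp'
  have hpppos := mem_pos hn hα hpp
  set A : ℝ := ∑ i, (pp i - p' i) * Real.log (p' i / b i) with hA
  set K : ℝ := ∑ i, (pp i - p' i)^2 / p' i with hK
  have hK0 : 0 ≤ K := Finset.sum_nonneg fun i _ => div_nonneg (sq_nonneg _) (hp'pos i).le
  have hsA : ∀ s : ℝ, 0 < s → s ≤ 1 → -(s*K) ≤ A := by
    intro s hs0 hs1
    set q : Fin n → ℝ := fun i => p' i + s * (pp i - p' i) with hqdef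
    have hqmem : q ∈ clippedSimplex n α := by
      constructor
      · have h1 : ∑ i, q i = (∑ i, p' i) + s * ((∑ i, pp i) - ∑ i, p' i) := by
          rw [Finset.sum_add_distrib, ← Finset.mul_sum, Finset.sum_sub_distrib]
        rw [h1, hp'.1, hpp.1]; ring
      · intro i
        have h1 := hp'.2 i; have h2 := hpp.2 i
        simp only [hqdef]
        nlinarith
    have hqpos := mem_pos hn hα hqmem
    have h3pt := breg_three_point (fun i => (hqpos i).le) hp'pos hb
    have hsum : ∑ i, (q i - p' i) * Real.log (p' i / b i) = s * A := by
      rw [hA, Finset.mul_sum]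
      apply Finset.sum_congr rfl
      intro i _
      simp only [hqdef]; ring
    rw [hsum] at h3pt
    have hquad : breg q p' ≤ s^2 * K := by
      calc breg q p' ≤ ∑ i, (q i - p' i)^2 / p' i :=
            breg_le_quad (fun i => (hqpos i).le) hp'pos
        _ = s^2 * K := by
            rw [hK, Finset.mul_sum]
            apply Finset.sum_congr rfl
            intro i _
            simp only [hqdef]
            field_simp; ring
    have hmq := hmin q hqmem
    -- s * A = breg q b - breg q p' - breg p' b ≥ -breg q p' ≥ -s^2 K
    have h5 : -(s^2 * K) ≤ s * A := by linarith
    nlinarith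
  have hA0 : 0 ≤ A := by
    have := le_of_forall_pos_le_add (a := 0) (b := A) ?_
    · exact this
    · intro ε hε
      have hs0 : 0 < min 1 (ε / (K+1)) := lt_min one_pos (by positivity)
      have := hsA _ hs0 (min_le_left _ _)
      have h2 : min 1 (ε / (K+1)) * (K+1) ≤ ε := by
        have := min_le_right 1 (ε / (K+1))
        have hk1 : (0:ℝ) < K + 1 := by linarith
        calc min 1 (ε / (K+1)) * (K+1) ≤ (ε / (K+1)) * (K+1) :=
              mul_le_mul_of_nonneg_right this hk1.le
          _ = ε := by field_simp
      nlinarith [hs0.le]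
  have h3pt := breg_three_point (fun i => (hpppos i).le) hp'pos hb
  have hnn : 0 ≤ breg p' b := breg_nonneg (fun i => (hp'pos i).le) hb
  rw [← hA] at h3pt
  linarith

lemma step_ineq {n : ℕ} (hn : 1 ≤ n) {α η : ℝ} (hα : 0 < α) (hη : 0 < η)
    {pcur p' pp : Fin n → ℝ} (u : Fin n → ℝ)
    (hpc : pcur ∈ clippedSimplex n α) (hp' : p' ∈ clippedSimplex n α)
    (hpp : pp ∈ clippedSimplex n α)
    (hmin : ∀ q ∈ clippedSimplex n α,
      -η * (∑ i, p' i * u i) + breg p' pcur ≤ -η * (∑ i, q i * u i) + breg q pcur) :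
    η * (∑ i, (pp i - pcur i) * u i) ≤
      breg pp pcur - breg pp p' + breg pcur (fun i => pcur i * Real.exp (η * u i)) := by
  have hpcpos := mem_pos hn hα hpc
  have hp'pos := mem_pos hn hα hp'
  have hpppos := mem_pos hn hα hpp
  set b : Fin n → ℝ := fun i => pcur i * Real.exp (η * u i) with hb
  have hbpos : ∀ i, 0 < b i := fun i => mul_pos (hpcpos i) (Real.exp_pos _)
  have hshift : ∀ q : Fin n → ℝ, (∀ i, 0 ≤ q i) →
      breg q b = breg q pcur - η * (∑ i, q i * u i) + ∑ i, (b i - pcur i) := by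
    intro q hq
    have := breg_shift (fun i => η * u i) hq hpcpos
    rw [hb, this]
    have h2 : ∑ i, q i * (η * u i) = η * ∑ i, q i * u i := by
      rw [Finset.mul_sum]; exact Finset.sum_congr rfl fun i _ => by ring
    rw [h2]
  have hminb : ∀ q ∈ clippedSimplex n α, breg p' b ≤ breg q b := by
    intro q hq
    have hqpos := mem_pos hn hα hq
    rw [hshift p' (fun i => (hp'pos i).le), hshift q (fun i => (hqpos i).le)]
    have := hmin q hq
    linarith
  have hproj := projection hn hα hbpos hp' hpp hminb
  have h1 := hshift pp (fun i => (hpppos i).le)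
  have h2 := hshift pcur (fun i => (hpcpos i).le)
  rw [breg_self] at h2
  have h3 : ∑ i, (pp i - pcur i) * u i = (∑ i, pp i * u i) - ∑ i, pcur i * u i := by
    rw [← Finset.sum_sub_distrib]; exact Finset.sum_congr rfl fun i _ => by ring
  rw [h3]
  nlinarith [breg_nonneg (fun i => (hpppos i).le) hbpos]

theorem stmt_10 (n : ℕ) (hn : 1 ≤ n) (α η : ℝ) (hα : 0 < α ∧ α < 1) (hη : 0 < η)
    (T : ℕ) (hT : 1 ≤ T)
    (p : ℕ → Fin n → ℝ) (hp0 : p 0 ∈ clippedSimplex n α)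
    (u : ℕ → Fin n → ℝ)
    (hmin : ∀ t < T, p (t + 1) ∈ clippedSimplex n α ∧
      ∀ q ∈ clippedSimplex n α,
        -η * (∑ i, p (t + 1) i * u t i) + breg (p (t + 1)) (p t) ≤
          -η * (∑ i, q i * u t i) + breg q (p t))
    (pt : ℕ → Fin n → ℝ)
    (hpt : ∀ t i, pt (t + 1) i = p t i * Real.exp (η * u t i)) :
    ∀ pp ∈ clippedSimplex n α,
      ∑ t ∈ Finset.range T, ∑ i, (pp i - p t i) * u t i ≤
        (1 / η) * (breg pp (p 0) + ∑ t ∈ Finset.range T, breg (p t) (pt (t + 1))) := by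
  obtain ⟨hα0, hα1⟩ := hα
  have hmem : ∀ t, t ≤ T → p t ∈ clippedSimplex n α := by
    intro t
    induction t with
    | zero => intro _; exact hp0
    | succ k _ => intro h; exact (hmin k (by omega)).1
  intro pp hpp
  have key : ∀ t < T, η * (∑ i, (pp i - p t i) * u t i) ≤
      breg pp (p t) - breg pp (p (t+1)) + breg (p t) (pt (t+1)) := by
    intro t ht
    have hpte : pt (t+1) = fun i => p t i * Real.exp (η * u t i) := funext (hpt t)
    rw [hpte]
    exact step_ineq hn hα0 hη (u t) (hmem t ht.le) (hmin t ht).1 hpp (hmin t ht).2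
  have hsum : η * ∑ t ∈ Finset.range T, ∑ i, (pp i - p t i) * u t i ≤
      breg pp (p 0) + ∑ t ∈ Finset.range T, breg (p t) (pt (t+1)) := by
    rw [Finset.mul_sum]
    calc ∑ t ∈ Finset.range T, η * ∑ i, (pp i - p t i) * u t i
        ≤ ∑ t ∈ Finset.range T,
            (breg pp (p t) - breg pp (p (t+1)) + breg (p t) (pt (t+1))) :=
          Finset.sum_le_sum fun t ht => key t (Finset.mem_range.mp ht)
      _ = (∑ t ∈ Finset.range T, (breg pp (p t) - breg pp (p (t+1))))
            + ∑ t ∈ Finset.range T, breg (p t) (pt (t+1)) := by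
          rw [← Finset.sum_add_distrib]
      _ = (breg pp (p 0) - breg pp (p T))
            + ∑ t ∈ Finset.range T, breg (p t) (pt (t+1)) := by
          rw [Finset.sum_range_sub' (fun t => breg pp (p t))]
      _ ≤ breg pp (p 0) + ∑ t ∈ Finset.range T, breg (p t) (pt (t+1)) := by
          have : 0 ≤ breg pp (p T) :=
            breg_nonneg (fun i => (mem_pos hn hα0 hpp i).le)
              (mem_pos hn hα0 (hmem T le_rfl))
          linarith
  rw [one_div, inv_mul_eq_div, le_div_iff₀ hη]
  calc (∑ t ∈ Finset.range T, ∑ i, (pp i - p t i) * u t i) * η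
      = η * ∑ t ∈ Finset.range T, ∑ i, (pp i - p t i) * u t i := mul_comm _ _
    _ ≤ _ := hsum
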